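/- Let G be a metabelian group (that is, the commutator subgroup of G is abelian), let g ∈ G, and let R be a right Engel sink of the inverse g⁻¹. Then R is also a left Engel sink of g. In particular, if g⁻¹ admits a finite right Engel sink, then g admits a finite left Engel sink. -/

import Mathlib

/-- The commutator `[a,b] = a⁻¹ b⁻¹ a b`. -/
def cmtr {G : Type*} [Group G] (a b : G) : G := a⁻¹ * b⁻¹ * a * b

/-- `engel a b n` is the left-normed Engel commutator `[a,_n b] = [[...[[a,b],b],...],b]`
with `b` repeated `n` times. -/
def engel {G : Type*} [Group G] (a b : G) : ℕ → G
  | 0 => a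
  | n + 1 => cmtr (engel a b n) b

/-- A finite subset `R` of `G` is a right Engel sink for `g` if for every `x ∈ G` there is a
positive integer `n₀` such that `[g,_n x] ∈ R` for all `n ≥ n₀`. -/
def IsRightEngelSink {G : Type*} [Group G] (g : G) (R : Set G) : Prop :=
  R.Finite ∧ ∀ x : G, ∃ n₀ : ℕ, 0 < n₀ ∧ ∀ n ≥ n₀, engel g x n ∈ R

/-- A finite subset `E` of `G` is a left Engel sink for `g` if for every `x ∈ G` there is a
positive integer `n₀` such that `[x,_n g] ∈ E` for all `n ≥ n₀`. -/
def IsLeftEngelSink {G : Type*} [Group G] (g : G) (E : Set G) : Prop :=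
  E.Finite ∧ ∀ x : G, ∃ n₀ : ℕ, 0 < n₀ ∧ ∀ n ≥ n₀, engel x g n ∈ E

/-- An element is almost right Engel if it admits a finite right Engel sink. -/
def AlmostRightEngel {G : Type*} [Group G] (g : G) : Prop :=
  ∃ R : Set G, IsRightEngelSink g R

/-- A group is locally nilpotent if every finitely generated subgroup is nilpotent. -/
def LocallyNilpotent (G : Type*) [Group G] : Prop :=
  ∀ H : Subgroup G, H.FG → Group.IsNilpotent H


open scoped commutatorElement in
private lemma cmtr_mem_commutator {G : Type*} [Group G] (a b : G) :
    cmtr a b ∈ commutator G := by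
  have : cmtr a b = ⁅a⁻¹, b⁻¹⁆ := by
    simp [cmtr, commutatorElement_def]
  rw [this, commutator_def]
  exact Subgroup.commutator_mem_commutator (Subgroup.mem_top _) (Subgroup.mem_top _)

private lemma engel_succ_mem_commutator {G : Type*} [Group G] (a b : G) (n : ℕ) :
    engel a b (n + 1) ∈ commutator G := cmtr_mem_commutator _ _

private lemma cmtr_comm_right {G : Type*} [Group G] {e c : G} (h : e * c = c * e) (g : G) :
    cmtr e (c * g) = cmtr e g := by
  have h' : c⁻¹ * e * c = e := by
    rw [mul_assoc, h, ← mul_assoc, inv_mul_cancel, one_mul]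
  simp only [cmtr, mul_inv_rev]
  calc e⁻¹ * (g⁻¹ * c⁻¹) * e * (c * g)
      = e⁻¹ * g⁻¹ * (c⁻¹ * e * c) * g := by group
    _ = e⁻¹ * g⁻¹ * e * g := by rw [h']

/-- Key identity: in a metabelian group, `[g⁻¹,_n ([x,g]·g)] = [x,_{n+1} g]` for `n ≥ 1`. -/
private lemma key_engel_identity {G : Type*} [Group G]
    (hmet : ∀ a ∈ commutator G, ∀ b ∈ commutator G, a * b = b * a)
    (g x : G) : ∀ n, 1 ≤ n → engel g⁻¹ (cmtr x g * g) n = engel x g (n + 1) := by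
  intro n hn
  induction n with
  | zero => omega
  | succ m ih =>
    rcases Nat.eq_or_lt_of_le hn with h1 | h1
    · have hm : m = 0 := by omega
      subst hm
      show cmtr g⁻¹ (cmtr x g * g) = cmtr (cmtr x g) g
      simp only [cmtr]
      group
    · have hm : 1 ≤ m := by omega
      show cmtr (engel g⁻¹ (cmtr x g * g) m) (cmtr x g * g) = cmtr (engel x g (m + 1)) g
      rw [ih hm]
      exact cmtr_comm_right
        (hmet _ (engel_succ_mem_commutator x g m) _ (cmtr_mem_commutator x g)) g

/-- In a metabelian group, a right Engel sink of `g⁻¹` is a left Engel sink of `g`. -/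
theorem metabelian_right_sink_is_left_sink {G : Type*} [Group G]
    (hmet : ∀ a ∈ commutator G, ∀ b ∈ commutator G, a * b = b * a)
    (g : G) (R : Set G) (hR : IsRightEngelSink g⁻¹ R) :
    IsLeftEngelSink g R := by
  obtain ⟨hfin, hsink⟩ := hR
  refine ⟨hfin, fun x => ?_⟩
  obtain ⟨n₀, hpos, h⟩ := hsink (cmtr x g * g)
  refine ⟨n₀ + 1, Nat.succ_pos _, fun n hn => ?_⟩
  obtain ⟨m, rfl⟩ : ∃ m, n = m + 1 := ⟨n - 1, by omega⟩
  rw [← key_engel_identity hmet g x m (by omega)]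
  exact h m (by omega)
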